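/- Let n ≤ p and let {A,B} be an (m,p,n)-GMP with GSVD as in the context, with generalized singular values (αᵢ, βᵢ). Then for every 1 ≤ i ≤ n, max_{Ξ₁ ∈ 𝕌_p, Ξ₂ ∈ 𝕌_n} |tr(Ξ₁ B (AᴴA + BᴴB)^{-1/2} Ξ₂ ℋ_i)| = βᵢ + β_{i+1} + ⋯ + βₙ. -/

import Mathlib

open Matrix BigOperators
open scoped ComplexOrder


namespace Stmt13Aux

def emb {n p : ℕ} (hnp : n ≤ p) (a : Fin n) : Fin p := ⟨p - n + a, by omega⟩

lemma emb_inj {n p : ℕ} (hnp : n ≤ p) : Function.Injective (emb hnp) := by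
  intro a b h
  have h' : p - n + (a : ℕ) = p - n + (b : ℕ) := congrArg Fin.val h
  exact Fin.ext (by omega)

lemma star_mul_self (z : ℂ) : star z * z = ((‖z‖ : ℂ)) ^ 2 := by
  have h1 : star z = (starRingEnd ℂ) z := rfl
  rw [h1, ← Complex.normSq_eq_conj_mul_self, Complex.normSq_eq_norm_sq]
  push_cast
  ring

lemma col_sum {N : ℕ} {U : Matrix (Fin N) (Fin N) ℂ}
    (hU : U ∈ Matrix.unitaryGroup (Fin N) ℂ) (a : Fin N) :
    ∑ k, ‖U k a‖ ^ 2 = 1 := by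
  have h := Matrix.mem_unitaryGroup_iff'.mp hU
  have h2 : ∑ j, star (U j a) * U j a = 1 := by
    have := congrFun (congrFun (congrArg (fun M : Matrix (Fin N) (Fin N) ℂ => (M : Fin N → Fin N → ℂ)) h) a) a
    simpa [Matrix.mul_apply, Matrix.one_apply, Matrix.star_apply] using this
  have h3 : ((∑ k, ‖U k a‖ ^ 2 : ℝ) : ℂ) = 1 := by
    push_cast
    rw [← h2]
    exact Finset.sum_congr rfl fun j _ => (star_mul_self _).symm
  exact_mod_cast h3

lemma row_sum {N : ℕ} {U : Matrix (Fin N) (Fin N) ℂ}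
    (hU : U ∈ Matrix.unitaryGroup (Fin N) ℂ) (a : Fin N) :
    ∑ k, ‖U a k‖ ^ 2 = 1 := by
  have h := Matrix.mem_unitaryGroup_iff.mp hU
  have h2 : ∑ j, star (U a j) * U a j = 1 := by
    have := congrFun (congrFun (congrArg (fun M : Matrix (Fin N) (Fin N) ℂ => (M : Fin N → Fin N → ℂ)) h) a) a
    simpa [Matrix.mul_apply, Matrix.one_apply, Matrix.star_apply, mul_comm] using this
  have h3 : ((∑ k, ‖U a k‖ ^ 2 : ℝ) : ℂ) = 1 := by
    push_cast
    rw [← h2]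
    exact Finset.sum_congr rfl fun j _ => (star_mul_self _).symm
  exact_mod_cast h3


lemma abs_sum_le {ι : Type*} (s : Finset ι) (x y : ι → ℂ) :
    ‖∑ b ∈ s, x b * y b‖ ≤
      Real.sqrt (∑ b ∈ s, ‖x b‖ ^ 2) * Real.sqrt (∑ b ∈ s, ‖y b‖ ^ 2) := by
  calc ‖∑ b ∈ s, x b * y b‖ ≤ ∑ b ∈ s, ‖x b‖ * ‖y b‖ := by
        refine (norm_sum_le _ _).trans ?_
        exact Finset.sum_le_sum fun b _ => (norm_mul _ _).le
    _ ≤ Real.sqrt (∑ b ∈ s, ‖x b‖ ^ 2) * Real.sqrt (∑ b ∈ s, ‖y b‖ ^ 2) :=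
        Real.sum_mul_le_sqrt_mul_sqrt s _ _

lemma sum_bound {n : ℕ} (β c : Fin n → ℝ) (i : Fin n)
    (hβ0 : ∀ k, 0 ≤ β k) (hmono : Monotone β)
    (hc0 : ∀ a, 0 ≤ c a) (hc1 : ∀ a, c a ≤ 1)
    (hcs : ∑ a, c a ≤ ((Finset.Ici i).card : ℝ)) :
    ∑ a, β a * c a ≤ ∑ k ∈ Finset.Ici i, β k := by
  classical
  have hdisj : Disjoint (Finset.Iio i) (Finset.Ici i) := by
    simp [Finset.disjoint_left]
  have hunion : Finset.Iio i ∪ Finset.Ici i = (Finset.univ : Finset (Fin n)) := by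
    ext a
    simp only [Finset.mem_union, Finset.mem_Iio, Finset.mem_Ici, Finset.mem_univ, iff_true]
    exact lt_or_ge a i
  have hsplit : ∀ f : Fin n → ℝ,
      ∑ a, f a = ∑ a ∈ Finset.Iio i, f a + ∑ a ∈ Finset.Ici i, f a := by
    intro f
    rw [← Finset.sum_union hdisj, hunion]
  rw [hsplit (fun a => β a * c a)]
  have h1 : ∑ a ∈ Finset.Iio i, β a * c a ≤ β i * ∑ a ∈ Finset.Iio i, c a := by
    rw [Finset.mul_sum]
    refine Finset.sum_le_sum fun a ha => ?_
    exact mul_le_mul_of_nonneg_right (hmono (le_of_lt (Finset.mem_Iio.mp ha))) (hc0 a)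
  have h2 : ∑ a ∈ Finset.Iio i, c a ≤ ∑ a ∈ Finset.Ici i, (1 - c a) := by
    have := hsplit c
    rw [Finset.sum_sub_distrib, Finset.sum_const, nsmul_eq_mul, mul_one]
    linarith
  have h3 : β i * ∑ a ∈ Finset.Ici i, (1 - c a)
      ≤ ∑ a ∈ Finset.Ici i, β a * (1 - c a) := by
    rw [Finset.mul_sum]
    refine Finset.sum_le_sum fun a ha => ?_
    refine mul_le_mul_of_nonneg_right (hmono (Finset.mem_Ici.mp ha)) ?_
    linarith [hc1 a]
  have h4 : ∑ a ∈ Finset.Iio i, β a * c a ≤ ∑ a ∈ Finset.Ici i, β a * (1 - c a) := by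
    calc ∑ a ∈ Finset.Iio i, β a * c a ≤ β i * ∑ a ∈ Finset.Iio i, c a := h1
      _ ≤ β i * ∑ a ∈ Finset.Ici i, (1 - c a) :=
          mul_le_mul_of_nonneg_left h2 (hβ0 i)
      _ ≤ ∑ a ∈ Finset.Ici i, β a * (1 - c a) := h3
  have h5 : ∑ a ∈ Finset.Ici i, β a * (1 - c a)
      = ∑ a ∈ Finset.Ici i, β a - ∑ a ∈ Finset.Ici i, β a * c a := by
    rw [← Finset.sum_sub_distrib]
    exact Finset.sum_congr rfl fun a _ => by ring
  linarith [h4, h5.le, h5.ge]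


lemma trace_formula {p n : ℕ} (hnp : n ≤ p) (β : Fin n → ℝ) (i : Fin n)
    (U : Matrix (Fin p) (Fin p) ℂ) (Q : Matrix (Fin n) (Fin n) ℂ) :
    Matrix.trace (U * (Matrix.of fun (k : Fin p) (l : Fin n) =>
        if (k : ℕ) + n = p + (l : ℕ) then Complex.ofReal (β l) else 0) * Q *
        Matrix.of (fun (k : Fin n) (l : Fin p) =>
          if (l : ℕ) + n = p + (k : ℕ) ∧ (i : ℕ) ≤ (k : ℕ) then (1 : ℂ) else 0))
      = ∑ b ∈ Finset.Ici i, ∑ a, U (emb hnp b) (emb hnp a) * (β a : ℂ) * Q a b := by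
  classical
  have hSig : (Matrix.of fun (k : Fin p) (l : Fin n) =>
      if (k : ℕ) + n = p + (l : ℕ) then Complex.ofReal (β l) else 0)
      = Matrix.of fun (k : Fin p) (l : Fin n) =>
          if k = emb hnp l then ((β l : ℝ) : ℂ) else 0 := by
    ext k l
    simp only [Matrix.of_apply]
    have h : ((k : ℕ) + n = p + (l : ℕ)) ↔ k = emb hnp l := by
      rw [Fin.ext_iff]
      simp only [emb]
      omega
    simp only [h]
  have hH : (Matrix.of fun (k : Fin n) (l : Fin p) =>
      if (l : ℕ) + n = p + (k : ℕ) ∧ (i : ℕ) ≤ (k : ℕ) then (1 : ℂ) else 0)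
      = Matrix.of fun (k : Fin n) (l : Fin p) =>
          if l = emb hnp k ∧ i ≤ k then (1 : ℂ) else 0 := by
    ext k l
    simp only [Matrix.of_apply]
    have h : (((l : ℕ) + n = p + (k : ℕ)) ∧ (i : ℕ) ≤ (k : ℕ)) ↔ (l = emb hnp k ∧ i ≤ k) := by
      rw [Fin.ext_iff, Fin.le_def]
      simp only [emb]
      omega
    simp only [h]
  rw [hSig, hH]
  have hUSig : U * (Matrix.of fun (k : Fin p) (l : Fin n) =>
      if k = emb hnp l then ((β l : ℝ) : ℂ) else 0)
      = Matrix.of fun (r : Fin p) (a : Fin n) => U r (emb hnp a) * ((β a : ℝ) : ℂ) := by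
    ext r a
    simp [Matrix.mul_apply, mul_ite, Finset.sum_ite_eq']
  rw [hUSig]
  have key : ∀ M : Matrix (Fin p) (Fin n) ℂ,
      Matrix.trace (M * Matrix.of fun (k : Fin n) (l : Fin p) =>
          if l = emb hnp k ∧ i ≤ k then (1 : ℂ) else 0)
        = ∑ b ∈ Finset.Ici i, M (emb hnp b) b := by
    intro M
    have h1 : Matrix.trace (M * Matrix.of fun (k : Fin n) (l : Fin p) =>
          if l = emb hnp k ∧ i ≤ k then (1 : ℂ) else 0)
        = ∑ r : Fin p, ∑ b : Fin n, M r b *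
            (if r = emb hnp b ∧ i ≤ b then (1 : ℂ) else 0) := by
      simp [Matrix.trace, Matrix.diag, Matrix.mul_apply]
    rw [h1, Finset.sum_comm]
    have h2 : ∀ b : Fin n, ∑ r : Fin p, M r b *
        (if r = emb hnp b ∧ i ≤ b then (1 : ℂ) else 0)
        = if i ≤ b then M (emb hnp b) b else 0 := by
      intro b
      by_cases hb : i ≤ b
      · simp [hb, mul_ite, Finset.sum_ite_eq']
      · simp [hb]
    simp only [h2]
    rw [← Finset.sum_filter]
    congr 1
    ext b
    simp
  rw [key]
  refine Finset.sum_congr rfl fun b _ => ?_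
  simp [Matrix.mul_apply]


lemma sum_emb_le {p n : ℕ} (hnp : n ≤ p) (f : Fin p → ℝ) (hf : ∀ k, 0 ≤ f k) :
    ∑ b : Fin n, f (emb hnp b) ≤ ∑ k : Fin p, f k := by
  classical
  have h : ∑ b : Fin n, f (emb hnp b)
      = ∑ k ∈ Finset.univ.image (emb hnp), f k := by
    rw [Finset.sum_image (fun b _ c _ h => emb_inj hnp h)]
  rw [h]
  exact Finset.sum_le_sum_of_subset_of_nonneg (Finset.subset_univ _) fun k _ _ => hf k

lemma trace_bound {p n : ℕ} (hnp : n ≤ p) (β : Fin n → ℝ) (i : Fin n)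
    (hβ0 : ∀ k, 0 ≤ β k) (hmono : Monotone β)
    {U : Matrix (Fin p) (Fin p) ℂ} (hU : U ∈ Matrix.unitaryGroup (Fin p) ℂ)
    {Q : Matrix (Fin n) (Fin n) ℂ} (hQ : Q ∈ Matrix.unitaryGroup (Fin n) ℂ) :
    ‖∑ b ∈ Finset.Ici i, ∑ a, U (emb hnp b) (emb hnp a) * (β a : ℂ) * Q a b‖
      ≤ ∑ k ∈ Finset.Ici i, β k := by
  classical
  rw [Finset.sum_comm]
  have hre : ∀ a : Fin n, ∑ b ∈ Finset.Ici i, U (emb hnp b) (emb hnp a) * (β a : ℂ) * Q a b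
      = ((β a : ℝ) : ℂ) * ∑ b ∈ Finset.Ici i, U (emb hnp b) (emb hnp a) * Q a b := by
    intro a
    rw [Finset.mul_sum]
    exact Finset.sum_congr rfl fun b _ => by ring
  simp only [hre]
  set c : Fin n → ℝ := fun a => ‖∑ b ∈ Finset.Ici i, U (emb hnp b) (emb hnp a) * Q a b‖
    with hc
  set u : Fin n → ℝ := fun a => ∑ b ∈ Finset.Ici i, ‖U (emb hnp b) (emb hnp a)‖ ^ 2 with hu
  set q : Fin n → ℝ := fun a => ∑ b ∈ Finset.Ici i, ‖Q a b‖ ^ 2 with hq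
  have hu0 : ∀ a, 0 ≤ u a := fun a => Finset.sum_nonneg fun b _ => sq_nonneg _
  have hq0 : ∀ a, 0 ≤ q a := fun a => Finset.sum_nonneg fun b _ => sq_nonneg _
  have hcuq : ∀ a, c a ≤ Real.sqrt (u a) * Real.sqrt (q a) := fun a =>
    abs_sum_le (Finset.Ici i) _ _
  have hu1 : ∀ a, u a ≤ 1 := by
    intro a
    calc u a ≤ ∑ b : Fin n, ‖U (emb hnp b) (emb hnp a)‖ ^ 2 :=
          Finset.sum_le_sum_of_subset_of_nonneg (Finset.subset_univ _)
            fun b _ _ => sq_nonneg _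
      _ ≤ ∑ k : Fin p, ‖U k (emb hnp a)‖ ^ 2 :=
          sum_emb_le hnp (fun k => ‖U k (emb hnp a)‖ ^ 2) fun k => sq_nonneg _
      _ = 1 := col_sum hU _
  have hq1 : ∀ a, q a ≤ 1 := by
    intro a
    calc q a ≤ ∑ b : Fin n, ‖Q a b‖ ^ 2 :=
          Finset.sum_le_sum_of_subset_of_nonneg (Finset.subset_univ _)
            fun b _ _ => sq_nonneg _
      _ = 1 := row_sum hQ _
  have hc0 : ∀ a, 0 ≤ c a := fun a => norm_nonneg _
  have hc1 : ∀ a, c a ≤ 1 := by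
    intro a
    refine (hcuq a).trans ?_
    calc Real.sqrt (u a) * Real.sqrt (q a) ≤ 1 * 1 := by
          refine mul_le_mul ?_ ?_ (Real.sqrt_nonneg _) zero_le_one
          · simpa using Real.sqrt_le_sqrt (hu1 a)
          · simpa using Real.sqrt_le_sqrt (hq1 a)
      _ = 1 := by norm_num
  have hsumu : ∑ a, u a ≤ ((Finset.Ici i).card : ℝ) := by
    rw [hu]
    rw [Finset.sum_comm]
    calc ∑ b ∈ Finset.Ici i, ∑ a : Fin n, ‖U (emb hnp b) (emb hnp a)‖ ^ 2
        ≤ ∑ b ∈ Finset.Ici i, (1 : ℝ) := by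
          refine Finset.sum_le_sum fun b _ => ?_
          calc ∑ a : Fin n, ‖U (emb hnp b) (emb hnp a)‖ ^ 2
              ≤ ∑ s : Fin p, ‖U (emb hnp b) s‖ ^ 2 :=
                sum_emb_le hnp (fun s => ‖U (emb hnp b) s‖ ^ 2) fun s => sq_nonneg _
            _ = 1 := row_sum hU _
      _ = ((Finset.Ici i).card : ℝ) := by simp
  have hsumq : ∑ a, q a ≤ ((Finset.Ici i).card : ℝ) := by
    refine le_of_eq ?_
    rw [hq]
    rw [Finset.sum_comm]
    calc ∑ b ∈ Finset.Ici i, ∑ a : Fin n, ‖Q a b‖ ^ 2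
        = ∑ b ∈ Finset.Ici i, (1 : ℝ) :=
          Finset.sum_congr rfl fun b _ => col_sum hQ _
      _ = ((Finset.Ici i).card : ℝ) := by simp
  have hcs : ∑ a, c a ≤ ((Finset.Ici i).card : ℝ) := by
    calc ∑ a, c a ≤ ∑ a, Real.sqrt (u a) * Real.sqrt (q a) :=
          Finset.sum_le_sum fun a _ => hcuq a
      _ ≤ Real.sqrt (∑ a, u a) * Real.sqrt (∑ a, q a) :=
          Real.sum_sqrt_mul_sqrt_le _ hu0 hq0
      _ ≤ Real.sqrt ((Finset.Ici i).card : ℝ) * Real.sqrt ((Finset.Ici i).card : ℝ) := by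
          refine mul_le_mul (Real.sqrt_le_sqrt hsumu) (Real.sqrt_le_sqrt hsumq)
            (Real.sqrt_nonneg _) (Real.sqrt_nonneg _)
      _ = ((Finset.Ici i).card : ℝ) := Real.mul_self_sqrt (by positivity)
  calc ‖∑ a : Fin n, ((β a : ℝ) : ℂ) * ∑ b ∈ Finset.Ici i, U (emb hnp b) (emb hnp a) * Q a b‖
      ≤ ∑ a : Fin n, ‖((β a : ℝ) : ℂ) * ∑ b ∈ Finset.Ici i, U (emb hnp b) (emb hnp a) * Q a b‖ :=
        norm_sum_le _ _
    _ = ∑ a : Fin n, β a * c a := by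
        refine Finset.sum_congr rfl fun a _ => ?_
        rw [norm_mul, Complex.norm_real, Real.norm_eq_abs, abs_of_nonneg (hβ0 a)]
    _ ≤ ∑ k ∈ Finset.Ici i, β k := sum_bound β c i hβ0 hmono hc0 hc1 hcs


lemma sigma_emb {p n : ℕ} (hnp : n ≤ p) (β : Fin n → ℝ) :
    (Matrix.of fun (k : Fin p) (l : Fin n) =>
      if (k : ℕ) + n = p + (l : ℕ) then Complex.ofReal (β l) else 0)
    = Matrix.of fun (k : Fin p) (l : Fin n) =>
        if k = emb hnp l then ((β l : ℝ) : ℂ) else 0 := by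
  ext k l
  simp only [Matrix.of_apply]
  have h : ((k : ℕ) + n = p + (l : ℕ)) ↔ k = emb hnp l := by
    rw [Fin.ext_iff]
    simp only [emb]
    omega
  simp only [h]

lemma sigma_conj_mul {p n : ℕ} (hnp : n ≤ p) (β : Fin n → ℝ) :
    (Matrix.of fun (k : Fin p) (l : Fin n) =>
      if (k : ℕ) + n = p + (l : ℕ) then Complex.ofReal (β l) else 0)ᴴ *
    (Matrix.of fun (k : Fin p) (l : Fin n) =>
      if (k : ℕ) + n = p + (l : ℕ) then Complex.ofReal (β l) else 0)
    = Matrix.diagonal (fun l => ((β l : ℝ) : ℂ) ^ 2) := by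
  classical
  rw [sigma_emb hnp β]
  ext a b
  simp only [Matrix.mul_apply, Matrix.conjTranspose_apply, Matrix.of_apply,
    Matrix.diagonal_apply]
  have h : ∀ k : Fin p,
      star (if k = emb hnp a then ((β a : ℝ) : ℂ) else 0) *
        (if k = emb hnp b then ((β b : ℝ) : ℂ) else 0)
      = if k = emb hnp a then ((if k = emb hnp b then ((β a : ℝ) : ℂ) * (β b : ℝ) else 0)) else 0 := by
    intro k
    by_cases h1 : k = emb hnp a
    · by_cases h2 : k = emb hnp b <;> simp [h1, h2, Complex.conj_ofReal]
    · simp [h1]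
  simp only [h]
  rw [Finset.sum_ite_eq' Finset.univ (emb hnp a)]
  simp only [Finset.mem_univ, if_true]
  by_cases hab : a = b
  · subst hab
    simp [sq]
  · have : emb hnp a ≠ emb hnp b := fun h => hab (emb_inj hnp h)
    simp [hab, this]

end Stmt13Aux

theorem stmt13
    {m p n : ℕ} (hnp : n ≤ p)
    (A : Matrix (Fin m) (Fin n) ℂ) (B : Matrix (Fin p) (Fin n) ℂ)
    (hrank : (Matrix.fromRows A B).rank = n)
    (V : Matrix (Fin p) (Fin p) ℂ) (hV : V ∈ Matrix.unitaryGroup (Fin p) ℂ)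
    (R : Matrix (Fin n) (Fin n) ℂ) (hR : IsUnit R.det)
    (β : Fin n → ℝ)
    (hβ0 : ∀ k, 0 ≤ β k) (hβ1 : ∀ k, β k ≤ 1) (hmono : Monotone β)
    (hB : B = V * (Matrix.of fun (k : Fin p) (l : Fin n) =>
        if (k : ℕ) + n = p + (l : ℕ) then Complex.ofReal (β l) else 0) * R)
    (hAA : Aᴴ * A = Rᴴ * Matrix.diagonal (fun l => Complex.ofReal (1 - β l ^ 2)) * R)
    (S : Matrix (Fin n) (Fin n) ℂ) (hS : S.PosDef)
    (hSsq : S * S = Aᴴ * A + Bᴴ * B)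
    (i : Fin n) :
(⨆ X1 : Matrix.unitaryGroup (Fin p) ℂ, ⨆ X2 : Matrix.unitaryGroup (Fin n) ℂ,
      ‖Matrix.trace ((X1 : Matrix (Fin p) (Fin p) ℂ) * B * S⁻¹ *
        (X2 : Matrix (Fin n) (Fin n) ℂ) *
        Matrix.of (fun (k : Fin n) (l : Fin p) =>
          if (l : ℕ) + n = p + (k : ℕ) ∧ (i : ℕ) ≤ (k : ℕ) then (1 : ℂ) else 0))‖) =
      ∑ k ∈ Finset.Ici i, β k := by
  classical
  set Sig : Matrix (Fin p) (Fin n) ℂ := Matrix.of fun (k : Fin p) (l : Fin n) =>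
      if (k : ℕ) + n = p + (l : ℕ) then Complex.ofReal (β l) else 0 with hSigdef
  set H : Matrix (Fin n) (Fin p) ℂ := Matrix.of (fun (k : Fin n) (l : Fin p) =>
      if (l : ℕ) + n = p + (k : ℕ) ∧ (i : ℕ) ≤ (k : ℕ) then (1 : ℂ) else 0) with hHdef
  -- basic facts about S
  have hSdet : IsUnit S.det := isUnit_iff_ne_zero.mpr hS.det_pos.ne'
  have hSinv : S⁻¹ * S = 1 := Matrix.nonsing_inv_mul S hSdet
  have hSinv' : S * S⁻¹ = 1 := Matrix.mul_nonsing_inv S hSdet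
  have hSH : Sᴴ = S := hS.isHermitian
  -- V unitary relations
  have hVV : Vᴴ * V = 1 := Matrix.mem_unitaryGroup_iff'.mp hV
  -- B^H B
  have hBB : Bᴴ * B = Rᴴ * Matrix.diagonal (fun l => ((β l : ℝ) : ℂ) ^ 2) * R := by
    rw [hB]
    calc (V * Sig * R)ᴴ * (V * Sig * R)
        = Rᴴ * (Sigᴴ * ((Vᴴ * V) * (Sig * R))) := by
          rw [Matrix.conjTranspose_mul, Matrix.conjTranspose_mul]
          simp only [Matrix.mul_assoc]
      _ = Rᴴ * (Sigᴴ * Sig) * R := by rw [hVV, Matrix.one_mul]; simp only [Matrix.mul_assoc]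
      _ = Rᴴ * Matrix.diagonal (fun l => ((β l : ℝ) : ℂ) ^ 2) * R := by
          rw [hSigdef, Stmt13Aux.sigma_conj_mul hnp β]
  -- R^H R = S * S
  have hRR : Rᴴ * R = S * S := by
    rw [hSsq, hAA, hBB]
    have hdiag : Matrix.diagonal (fun l => Complex.ofReal (1 - β l ^ 2)) +
        Matrix.diagonal (fun l => ((β l : ℝ) : ℂ) ^ 2) = 1 := by
      rw [Matrix.diagonal_add, ← Matrix.diagonal_one]
      congr 1
      funext l
      push_cast
      ring
    rw [← Matrix.add_mul, ← Matrix.mul_add, hdiag, Matrix.mul_one]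
  -- W := R * S⁻¹ is unitary
  set W : Matrix (Fin n) (Fin n) ℂ := R * S⁻¹ with hWdef
  have hW : W ∈ Matrix.unitaryGroup (Fin n) ℂ := by
    rw [Matrix.mem_unitaryGroup_iff']
    have hstar : star W = S⁻¹ * Rᴴ := by
      rw [hWdef, Matrix.star_eq_conjTranspose, Matrix.conjTranspose_mul,
        Matrix.conjTranspose_nonsing_inv, hSH]
    rw [hstar, hWdef]
    calc S⁻¹ * Rᴴ * (R * S⁻¹) = S⁻¹ * (Rᴴ * R) * S⁻¹ := by
          simp only [Matrix.mul_assoc]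
      _ = S⁻¹ * (S * S) * S⁻¹ := by rw [hRR]
      _ = (S⁻¹ * S) * (S * S⁻¹) := by simp only [Matrix.mul_assoc]
      _ = 1 := by rw [hSinv, hSinv', Matrix.one_mul]
  -- B * S⁻¹ = V * Sig * W
  have hBS : B * S⁻¹ = V * Sig * W := by
    rw [hB, hWdef]
    simp only [Matrix.mul_assoc]
  -- rewriting the trace argument
  have hrw : ∀ (X1 : Matrix (Fin p) (Fin p) ℂ) (X2 : Matrix (Fin n) (Fin n) ℂ),
      X1 * B * S⁻¹ * X2 * H = (X1 * V) * Sig * (W * X2) * H := by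
    intro X1 X2
    rw [Matrix.mul_assoc X1 B S⁻¹, hBS]
    simp only [Matrix.mul_assoc]
  -- the uniform upper bound
  have hub : ∀ (X1 : Matrix.unitaryGroup (Fin p) ℂ) (X2 : Matrix.unitaryGroup (Fin n) ℂ),
      ‖Matrix.trace ((X1 : Matrix (Fin p) (Fin p) ℂ) * B * S⁻¹ *
        (X2 : Matrix (Fin n) (Fin n) ℂ) * H)‖ ≤ ∑ k ∈ Finset.Ici i, β k := by
    intro X1 X2
    have hU : (X1 : Matrix (Fin p) (Fin p) ℂ) * V ∈ Matrix.unitaryGroup (Fin p) ℂ :=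
      mul_mem X1.2 hV
    have hQ : W * (X2 : Matrix (Fin n) (Fin n) ℂ) ∈ Matrix.unitaryGroup (Fin n) ℂ :=
      mul_mem hW X2.2
    rw [hrw, hSigdef, hHdef, Stmt13Aux.trace_formula hnp β i]
    exact Stmt13Aux.trace_bound hnp β i hβ0 hmono hU hQ
  -- the value at the optimal pair
  have hVstar : star V ∈ Matrix.unitaryGroup (Fin p) ℂ := Unitary.star_mem hV
  have hWstar : star W ∈ Matrix.unitaryGroup (Fin n) ℂ := Unitary.star_mem hW
  set X1o : Matrix.unitaryGroup (Fin p) ℂ := ⟨star V, hVstar⟩ with hX1o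
  set X2o : Matrix.unitaryGroup (Fin n) ℂ := ⟨star W, hWstar⟩ with hX2o
  have hvalue : ‖Matrix.trace ((X1o : Matrix (Fin p) (Fin p) ℂ) * B * S⁻¹ *
      (X2o : Matrix (Fin n) (Fin n) ℂ) * H)‖ = ∑ k ∈ Finset.Ici i, β k := by
    rw [hrw, hSigdef, hHdef, Stmt13Aux.trace_formula hnp β i]
    have h1 : (X1o : Matrix (Fin p) (Fin p) ℂ) * V = 1 := by
      rw [hX1o]
      exact Matrix.mem_unitaryGroup_iff'.mp hV
    have h2 : W * (X2o : Matrix (Fin n) (Fin n) ℂ) = 1 := by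
      rw [hX2o]
      exact Matrix.mem_unitaryGroup_iff.mp hW
    rw [h1, h2]
    have h3 : ∑ b ∈ Finset.Ici i, ∑ a : Fin n,
        (1 : Matrix (Fin p) (Fin p) ℂ) (Stmt13Aux.emb hnp b) (Stmt13Aux.emb hnp a) *
          ((β a : ℝ) : ℂ) * (1 : Matrix (Fin n) (Fin n) ℂ) a b
        = ((∑ k ∈ Finset.Ici i, β k : ℝ) : ℂ) := by
      push_cast
      refine Finset.sum_congr rfl fun b _ => ?_
      rw [Finset.sum_eq_single b]
      · simp [Matrix.one_apply]
      · intro a _ hab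
        simp [Matrix.one_apply, hab]
      · simp
    rw [h3, Complex.norm_real, Real.norm_eq_abs,
      abs_of_nonneg (Finset.sum_nonneg fun k _ => hβ0 k)]
  -- supremum argument
  haveI : Nonempty (Matrix.unitaryGroup (Fin p) ℂ) := ⟨1⟩
  haveI : Nonempty (Matrix.unitaryGroup (Fin n) ℂ) := ⟨1⟩
  apply le_antisymm
  · exact ciSup_le fun X1 => ciSup_le fun X2 => hub X1 X2
  · have hbdd2 : BddAbove (Set.range fun X2 : Matrix.unitaryGroup (Fin n) ℂ =>
        ‖Matrix.trace ((X1o : Matrix (Fin p) (Fin p) ℂ) * B * S⁻¹ *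
          (X2 : Matrix (Fin n) (Fin n) ℂ) * H)‖) := by
      refine ⟨∑ k ∈ Finset.Ici i, β k, ?_⟩
      rintro y ⟨X2, rfl⟩
      exact hub X1o X2
    have hbdd1 : BddAbove (Set.range fun X1 : Matrix.unitaryGroup (Fin p) ℂ =>
        ⨆ X2 : Matrix.unitaryGroup (Fin n) ℂ,
          ‖Matrix.trace ((X1 : Matrix (Fin p) (Fin p) ℂ) * B * S⁻¹ *
            (X2 : Matrix (Fin n) (Fin n) ℂ) * H)‖) := by
      refine ⟨∑ k ∈ Finset.Ici i, β k, ?_⟩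
      rintro y ⟨X1, rfl⟩
      exact ciSup_le fun X2 => hub X1 X2
    calc (∑ k ∈ Finset.Ici i, β k) = ‖Matrix.trace
          ((X1o : Matrix (Fin p) (Fin p) ℂ) * B * S⁻¹ *
            (X2o : Matrix (Fin n) (Fin n) ℂ) * H)‖ := hvalue.symm
      _ ≤ ⨆ X2 : Matrix.unitaryGroup (Fin n) ℂ,
            ‖Matrix.trace ((X1o : Matrix (Fin p) (Fin p) ℂ) * B * S⁻¹ *
              (X2 : Matrix (Fin n) (Fin n) ℂ) * H)‖ := le_ciSup hbdd2 X2o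
      _ ≤ ⨆ X1 : Matrix.unitaryGroup (Fin p) ℂ, ⨆ X2 : Matrix.unitaryGroup (Fin n) ℂ,
            ‖Matrix.trace ((X1 : Matrix (Fin p) (Fin p) ℂ) * B * S⁻¹ *
              (X2 : Matrix (Fin n) (Fin n) ℂ) * H)‖ := le_ciSup hbdd1 X1o
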